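/- Let f: ℝⁿ → ℝ be continuously differentiable and let {x^k} be generated by x^{k+1} = x^k + t_k d^k with t_k ≥ 0, where ∑_{k=1}^∞ t_k ‖d^k‖² < ∞ and {t_k} is bounded from above. If the sequence {x^k} is bounded, then the set of accumulation points of {x^k} is nonempty, compact, and connected in ℝⁿ. -/

import Mathlib

open Filter Metric

/-- Theorem 3.3(i): if `x^{k+1} = x^k + t_k d^k`, `∑ t_k ‖d^k‖² < ∞`, `{t_k}` is bounded
above, and `{x^k}` is bounded, then the set of accumulation points of `{x^k}` is
nonempty, compact and connected. -/
theorem stmt3 {n : ℕ} (f : EuclideanSpace ℝ (Fin n) → ℝ) (hf : ContDiff ℝ 1 f)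
    (x d : ℕ → EuclideanSpace ℝ (Fin n)) (t : ℕ → ℝ)
    (ht : ∀ k, 0 ≤ t k)
    (hstep : ∀ k, x (k + 1) = x k + t k • d k)
    (hsum : Summable (fun k => t k * ‖d k‖ ^ 2))
    (T : ℝ) (hT : ∀ k, t k ≤ T)
    (hbdd : Bornology.IsBounded (Set.range x)) :
    ({y : EuclideanSpace ℝ (Fin n) |
        ∃ φ : ℕ → ℕ, StrictMono φ ∧ Tendsto (x ∘ φ) atTop (nhds y)}).Nonempty ∧
    IsCompact {y : EuclideanSpace ℝ (Fin n) |
        ∃ φ : ℕ → ℕ, StrictMono φ ∧ Tendsto (x ∘ φ) atTop (nhds y)} ∧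
    IsConnected {y : EuclideanSpace ℝ (Fin n) |
        ∃ φ : ℕ → ℕ, StrictMono φ ∧ Tendsto (x ∘ φ) atTop (nhds y)} := by
  classical
  set A := {y : EuclideanSpace ℝ (Fin n) |
      ∃ φ : ℕ → ℕ, StrictMono φ ∧ Tendsto (x ∘ φ) atTop (nhds y)} with hA
  set K := closure (Set.range x) with hK
  have hKcpt : IsCompact K := hbdd.isCompact_closure
  have hxK : ∀ k, x k ∈ K := fun k => subset_closure (Set.mem_range_self k)
  -- A as cluster points
  have hAcluster : A = {y | MapClusterPt y atTop x} := by
    ext y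
    constructor
    · rintro ⟨φ, hφ, hlim⟩
      exact MapClusterPt.of_comp hφ.tendsto_atTop hlim.mapClusterPt
    · intro hy
      exact TopologicalSpace.FirstCountableTopology.tendsto_subseq hy
  have hAclosed : IsClosed A := by
    rw [hAcluster]
    exact isClosed_setOf_clusterPt
  have hAsubK : A ⊆ K := by
    rintro y ⟨φ, hφ, hlim⟩
    exact isClosed_closure.mem_of_tendsto hlim (Eventually.of_forall fun j => hxK _)
  have hAcpt : IsCompact A := hKcpt.of_isClosed_subset hAclosed hAsubK
  have hAne : A.Nonempty := by
    obtain ⟨a, -, φ, hφ, hlim⟩ := hKcpt.tendsto_subseq hxK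
    exact ⟨a, φ, hφ, hlim⟩
  refine ⟨hAne, hAcpt, hAne, ?_⟩
  -- steps tend to zero
  have hTnn : 0 ≤ T := le_trans (ht 0) (hT 0)
  have hstep0 : Tendsto (fun k => dist (x (k + 1)) (x k)) atTop (nhds 0) := by
    have ha0 : Tendsto (fun k => t k * ‖d k‖ ^ 2) atTop (nhds 0) := hsum.tendsto_atTop_zero
    have hm : Tendsto (fun k => T * (t k * ‖d k‖ ^ 2)) atTop (nhds 0) := by
      simpa using ha0.const_mul T
    have hsq : Tendsto (fun k => Real.sqrt (T * (t k * ‖d k‖ ^ 2))) atTop (nhds 0) := by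
      simpa [Function.comp_def] using (Real.continuous_sqrt.tendsto 0).comp hm
    refine tendsto_of_tendsto_of_tendsto_of_le_of_le tendsto_const_nhds hsq
      (fun k => dist_nonneg) (fun k => ?_)
    have hd : dist (x (k + 1)) (x k) = t k * ‖d k‖ := by
      rw [hstep k]
      simp [dist_eq_norm, norm_smul, abs_of_nonneg (ht k)]
    rw [hd]
    rw [← Real.sqrt_sq (mul_nonneg (ht k) (norm_nonneg _))]
    apply Real.sqrt_le_sqrt
    have : (t k * ‖d k‖) ^ 2 = t k * (t k * ‖d k‖ ^ 2) := by ring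
    rw [this]
    exact mul_le_mul_of_nonneg_right (hT k) (mul_nonneg (ht k) (sq_nonneg _))
  -- preconnected by contradiction
  rw [IsPreconnected]
  by_contra hcon
  push_neg at hcon
  obtain ⟨U, V, hU, hV, hcover, hUne, hVne, hUV⟩ := hcon
  have hUV' : ∀ a, a ∈ A → a ∈ U → a ∈ V → False := fun a h1 h2 h3 =>
    Set.eq_empty_iff_forall_notMem.mp hUV a ⟨h1, h2, h3⟩
  set A₁ := A \ V with hA₁def
  set A₂ := A \ U with hA₂def
  have hA₁cpt : IsCompact A₁ := hAcpt.of_isClosed_subset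
    (hAclosed.sdiff hV) Set.diff_subset
  have hA₂cpt : IsCompact A₂ := hAcpt.of_isClosed_subset
    (hAclosed.sdiff hU) Set.diff_subset
  have hA₁ne : A₁.Nonempty := by
    obtain ⟨a, haA, haU⟩ := hUne
    exact ⟨a, haA, fun haV => hUV' a haA haU haV⟩
  have hA₂ne : A₂.Nonempty := by
    obtain ⟨a, haA, haV⟩ := hVne
    exact ⟨a, haA, fun haU => hUV' a haA haU haV⟩
  have hsplit : ∀ a ∈ A, a ∈ A₁ ∨ a ∈ A₂ := by
    intro a haA
    rcases hcover haA with h | h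
    · exact Or.inl ⟨haA, fun hv => hUV' a haA h hv⟩
    · exact Or.inr ⟨haA, fun hu => hUV' a haA hu h⟩
  -- positive distance δ between A₁ and A₂
  obtain ⟨a₀, ha₀A₁, ha₀min⟩ := hA₁cpt.exists_isMinOn hA₁ne
    (continuous_infDist_pt A₂).continuousOn
  set δ := infDist a₀ A₂ with hδdef
  have hδpos : 0 < δ := by
    rw [hδdef]
    refine (hA₂cpt.isClosed.notMem_iff_infDist_pos hA₂ne).mp ?_
    intro h
    rcases hcover ha₀A₁.1 with hu | hv
    · exact h.2 hu
    · exact ha₀A₁.2 hv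
  have hdistδ : ∀ a₁ ∈ A₁, ∀ a₂ ∈ A₂, δ ≤ dist a₁ a₂ := by
    intro a₁ h₁ a₂ h₂
    calc δ ≤ infDist a₁ A₂ := ha₀min h₁
    _ ≤ dist a₁ a₂ := infDist_le_dist_of_mem h₂
  have hleInf : ∀ z : EuclideanSpace ℝ (Fin n), (∀ a₁ ∈ A₁, δ ≤ dist z a₁) →
      δ ≤ infDist z A₁ := by
    intro z h
    refine le_of_not_gt fun hlt => ?_
    obtain ⟨a₁, ha, hd⟩ := (infDist_lt_iff hA₁ne).mp hlt
    exact absurd hd (not_lt.mpr (h a₁ ha))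
  set ε := δ / 4 with hε
  have hεpos : 0 < ε := by positivity
  set g := fun k => infDist (x k) A₁ with hg
  have hglip : ∀ j k, g j ≤ g k + dist (x j) (x k) := fun j k =>
    infDist_le_infDist_add_dist
  -- infinitely often near A₁
  have hfreq1 : ∀ M, ∃ k ≥ M, g k < ε := by
    obtain ⟨a₁, ha₁⟩ := hA₁ne
    obtain ⟨φ, hφ, hlim⟩ := ha₁.1
    intro M
    have h1 : MapClusterPt a₁ atTop x := MapClusterPt.of_comp hφ.tendsto_atTop hlim.mapClusterPt
    have := (mapClusterPt_iff_frequently.mp h1 (ball a₁ ε) (ball_mem_nhds _ hεpos))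
    obtain ⟨k, hk, hkball⟩ := (frequently_atTop.mp this) M
    have : g k ≤ dist (x k) a₁ := infDist_le_dist_of_mem ha₁
    exact ⟨k, hk, lt_of_le_of_lt this (mem_ball.mp hkball)⟩
  have hfreq2 : ∀ M, ∃ k ≥ M, 2 * ε < g k := by
    obtain ⟨a₂, ha₂⟩ := hA₂ne
    obtain ⟨φ, hφ, hlim⟩ := ha₂.1
    intro M
    have h2 : MapClusterPt a₂ atTop x := MapClusterPt.of_comp hφ.tendsto_atTop hlim.mapClusterPt
    have := (mapClusterPt_iff_frequently.mp h2 (ball a₂ ε) (ball_mem_nhds _ hεpos))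
    obtain ⟨k, hk, hkball⟩ := (frequently_atTop.mp this) M
    refine ⟨k, hk, ?_⟩
    have hga : δ ≤ infDist a₂ A₁ := hleInf a₂ (fun a₁ h₁ => by
      rw [dist_comm]; exact hdistδ a₁ h₁ a₂ ha₂)
    have : infDist a₂ A₁ ≤ g k + dist a₂ (x k) := infDist_le_infDist_add_dist
    have hdk : dist a₂ (x k) < ε := by rw [dist_comm]; exact mem_ball.mp hkball
    have : δ - ε < g k := by linarith [le_trans hga this]
    linarith [this, hε ▸ (by linarith : δ - ε = 3 * ε)]
  -- eventually small steps
  obtain ⟨N, hN⟩ := (Metric.tendsto_atTop.mp hstep0 ε hεpos)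
  have hNstep : ∀ k ≥ N, dist (x (k + 1)) (x k) < ε := by
    intro k hk
    have := hN k hk
    rwa [dist_zero_right, Real.norm_eq_abs, abs_of_nonneg dist_nonneg] at this
  -- middle crossing infinitely often
  have hmid : ∀ M, ∃ j ≥ M, ε ≤ g j ∧ g j ≤ 2 * ε := by
    intro M
    obtain ⟨k, hk, hgk⟩ := hfreq1 (max M N)
    obtain ⟨m, hm, hgm⟩ := hfreq2 (k + 1)
    have hex : ∃ j, k ≤ j ∧ ε ≤ g j := ⟨m, le_trans (Nat.le_succ k) hm, by linarith⟩
    obtain ⟨hjk, hjε⟩ := Nat.find_spec hex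
    set j := Nat.find hex with hj
    have hjpos : k < j := lt_of_le_of_ne hjk (fun h => by
      rw [← h] at hjε; linarith)
    have hprev : ¬ (k ≤ j - 1 ∧ ε ≤ g (j - 1)) := Nat.find_min hex (by omega)
    have hkj1 : k ≤ j - 1 := by omega
    have hgj1 : g (j - 1) < ε := by
      by_contra h
      exact hprev ⟨hkj1, le_of_not_gt h⟩
    have hj1 : j - 1 + 1 = j := by omega
    have hstepj : dist (x j) (x (j - 1)) < ε := by
      have := hNstep (j - 1) (by omega : N ≤ j - 1)
      rwa [hj1] at this
    have hgj : g j ≤ 2 * ε := by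
      have := hglip j (j - 1)
      linarith
    exact ⟨j, by omega, hjε, hgj⟩
  -- get accumulation point in the middle
  set C := {z : EuclideanSpace ℝ (Fin n) | ε ≤ infDist z A₁ ∧ infDist z A₁ ≤ 2 * ε} with hC
  have hCclosed : IsClosed C := by
    have h1 : IsClosed {z : EuclideanSpace ℝ (Fin n) | ε ≤ infDist z A₁} :=
      isClosed_le continuous_const (continuous_infDist_pt A₁)
    have h2 : IsClosed {z : EuclideanSpace ℝ (Fin n) | infDist z A₁ ≤ 2 * ε} :=
      isClosed_le (continuous_infDist_pt A₁) continuous_const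
    exact h1.inter h2
  have hfreqC : ∃ᶠ k in atTop, x k ∈ K ∩ C := by
    rw [frequently_atTop]
    intro M
    obtain ⟨j, hj, h1, h2⟩ := hmid M
    exact ⟨j, hj, hxK j, h1, h2⟩
  obtain ⟨y, hyKC, φ, hφ, hlim⟩ := (hKcpt.inter_right hCclosed).tendsto_subseq' hfreqC
  have hyA : y ∈ A := ⟨φ, hφ, hlim⟩
  rcases hsplit y hyA with h | h
  · have : infDist y A₁ = 0 := infDist_zero_of_mem h
    have := hyKC.2.1
    linarith
  · have hδy : δ ≤ infDist y A₁ := hleInf y (fun a₁ h₁ => by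
      rw [dist_comm]; exact hdistδ a₁ h₁ y h)
    have h2 := hyKC.2.2
    have hδε : δ = 4 * ε := by rw [hε]; ring
    linarith
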